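/- If no connected component of the complement of G₁ is isomorphic to a connected component of the complement of G₂, then Aut(G₁ + G₂) is isomorphic to Aut(G₁) × Aut(G₂). -/

import Mathlib

/-- The disjoint union of two graphs. -/
def sumGraph {α β : Type*} (G : SimpleGraph α) (H : SimpleGraph β) :
    SimpleGraph (α ⊕ β) where
  Adj a b :=
    match a, b with
    | Sum.inl u, Sum.inl v => G.Adj u v
    | Sum.inr u, Sum.inr v => H.Adj u v
    | _, _ => False
  symm := ⟨by rintro (u | u) (v | v) h <;> simp_all [SimpleGraph.adj_comm]⟩
  loopless := ⟨by rintro (u | u) h <;> simp_all⟩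

/-- The join of two graphs on disjoint vertex sets: all edges of both graphs
together with all edges between the two vertex sets. -/
def joinGraph {α β : Type*} (G : SimpleGraph α) (H : SimpleGraph β) :
    SimpleGraph (α ⊕ β) where
  Adj a b :=
    match a, b with
    | Sum.inl u, Sum.inl v => G.Adj u v
    | Sum.inr u, Sum.inr v => H.Adj u v
    | _, _ => True
  symm := ⟨by rintro (u | u) (v | v) h <;> simp_all [SimpleGraph.adj_comm]⟩
  loopless := ⟨by rintro (u | u) h <;> simp_all⟩

section Aux

variable {α β : Type*} {H₁ : SimpleGraph α} {H₂ : SimpleGraph β}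

@[simp] lemma sumGraph_adj_inl_inl {u v : α} :
    (sumGraph H₁ H₂).Adj (Sum.inl u) (Sum.inl v) ↔ H₁.Adj u v := Iff.rfl

@[simp] lemma sumGraph_adj_inr_inr {u v : β} :
    (sumGraph H₁ H₂).Adj (Sum.inr u) (Sum.inr v) ↔ H₂.Adj u v := Iff.rfl

@[simp] lemma sumGraph_adj_inl_inr {u : α} {v : β} :
    ¬ (sumGraph H₁ H₂).Adj (Sum.inl u) (Sum.inr v) := fun h => h

@[simp] lemma sumGraph_adj_inr_inl {u : β} {v : α} :
    ¬ (sumGraph H₁ H₂).Adj (Sum.inr u) (Sum.inl v) := fun h => h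

lemma walk_cases {a b : α ⊕ β} (p : (sumGraph H₁ H₂).Walk a b) :
    (∃ u v, a = Sum.inl u ∧ b = Sum.inl v ∧ H₁.Reachable u v) ∨
    (∃ u v, a = Sum.inr u ∧ b = Sum.inr v ∧ H₂.Reachable u v) := by
  induction p with
  | nil =>
    rename_i z
    rcases z with u | u
    · exact Or.inl ⟨u, u, rfl, rfl, SimpleGraph.Reachable.refl u⟩
    · exact Or.inr ⟨u, u, rfl, rfl, SimpleGraph.Reachable.refl u⟩
  | @cons a' c' b' hadj p ih =>
    rcases a' with u | u <;> rcases c' with x | x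
    · rcases ih with ⟨x', v, hx, hb, hr⟩ | ⟨x', v, hx, hb, hr⟩
      · cases hx
        exact Or.inl ⟨u, v, rfl, hb,
          (SimpleGraph.Adj.reachable (sumGraph_adj_inl_inl.mp hadj)).trans hr⟩
      · exact absurd hx (by simp)
    · exact absurd hadj (by simp)
    · exact absurd hadj (by simp)
    · rcases ih with ⟨x', v, hx, hb, hr⟩ | ⟨x', v, hx, hb, hr⟩
      · exact absurd hx (by simp)
      · cases hx
        exact Or.inr ⟨u, v, rfl, hb,
          (SimpleGraph.Adj.reachable (sumGraph_adj_inr_inr.mp hadj)).trans hr⟩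

lemma reach_inl {u v : α} (hr : H₁.Reachable u v) :
    (sumGraph H₁ H₂).Reachable (Sum.inl u) (Sum.inl v) :=
  hr.map ⟨Sum.inl, fun h => h⟩

lemma reach_inr {u v : β} (hr : H₂.Reachable u v) :
    (sumGraph H₁ H₂).Reachable (Sum.inr u) (Sum.inr v) :=
  hr.map ⟨Sum.inr, fun h => h⟩

/-- If an automorphism of the disjoint union sends a left vertex to a right
vertex, the corresponding connected components are isomorphic. -/
lemma exists_iso (f : sumGraph H₁ H₂ ≃g sumGraph H₁ H₂) (u : α) (w : β)
    (hfu : f (Sum.inl u) = Sum.inr w) :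
    Nonempty (H₁.induce (H₁.connectedComponentMk u).supp ≃g
      H₂.induce (H₂.connectedComponentMk w).supp) := by
  -- key facts
  have key : ∀ v, H₁.Reachable v u → ∃ x, f (Sum.inl v) = Sum.inr x ∧ H₂.Reachable x w := by
    intro v hv
    have : (sumGraph H₁ H₂).Reachable (f (Sum.inl v)) (Sum.inr w) := by
      rw [← hfu]
      exact SimpleGraph.Reachable.map f.toHom (reach_inl hv)
    obtain ⟨p⟩ := this
    rcases walk_cases p with ⟨x', v', hx, hb, hr⟩ | ⟨x', v', hx, hb, hr⟩
    · exact absurd hb (by simp)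
    · cases hb; exact ⟨x', hx, hr⟩
  have key' : ∀ x, H₂.Reachable x w → ∃ v, f.symm (Sum.inr x) = Sum.inl v ∧ H₁.Reachable v u := by
    intro x hx
    have hsu : f.symm (Sum.inr w) = Sum.inl u := by
      rw [← hfu, f.symm_apply_apply]
    have : (sumGraph H₁ H₂).Reachable (f.symm (Sum.inr x)) (Sum.inl u) := by
      rw [← hsu]
      exact SimpleGraph.Reachable.map f.symm.toHom (reach_inr hx)
    obtain ⟨p⟩ := this
    rcases walk_cases p with ⟨x', v', hx', hb, hr⟩ | ⟨x', v', hx', hb, hr⟩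
    · cases hb; exact ⟨x', hx', hr⟩
    · exact absurd hb (by simp)
  have memL : ∀ v : α, v ∈ (H₁.connectedComponentMk u).supp ↔ H₁.Reachable v u := by
    intro v
    rw [SimpleGraph.ConnectedComponent.mem_supp_iff, SimpleGraph.ConnectedComponent.eq]
  have memR : ∀ x : β, x ∈ (H₂.connectedComponentMk w).supp ↔ H₂.Reachable x w := by
    intro x
    rw [SimpleGraph.ConnectedComponent.mem_supp_iff, SimpleGraph.ConnectedComponent.eq]
  refine ⟨⟨⟨fun v => ⟨Sum.elim (fun _ => w) id (f (Sum.inl v.1)), ?_⟩,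
      fun x => ⟨Sum.elim id (fun _ => u) (f.symm (Sum.inr x.1)), ?_⟩, ?_, ?_⟩, ?_⟩⟩
  · obtain ⟨x, hx, hr⟩ := key v.1 ((memL v.1).mp v.2)
    rw [hx]
    exact (memR x).mpr hr
  · obtain ⟨v, hv, hr⟩ := key' x.1 ((memR x.1).mp x.2)
    rw [hv]
    exact (memL v).mpr hr
  · rintro ⟨v, hv⟩
    obtain ⟨x, hx, hr⟩ := key v ((memL v).mp hv)
    apply Subtype.ext
    show Sum.elim id _ (f.symm (Sum.inr (Sum.elim _ id (f (Sum.inl v))))) = v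
    rw [hx]
    simp only [Sum.elim_inr, id_eq]
    rw [← hx, f.symm_apply_apply]
    rfl
  · rintro ⟨x, hx⟩
    obtain ⟨v, hv, hr⟩ := key' x ((memR x).mp hx)
    apply Subtype.ext
    show Sum.elim _ id (f (Sum.inl (Sum.elim id _ (f.symm (Sum.inr x))))) = x
    rw [hv]
    simp only [Sum.elim_inl, id_eq]
    rw [← hv, f.apply_symm_apply]
    rfl
  · rintro ⟨v, hv⟩ ⟨v', hv'⟩
    obtain ⟨x, hx, hr⟩ := key v ((memL v).mp hv)
    obtain ⟨x', hx', hr'⟩ := key v' ((memL v').mp hv')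
    simp only [SimpleGraph.comap_adj, Function.Embedding.coe_subtype, Equiv.coe_fn_mk,
      hx, hx', Sum.elim_inr, id]
    rw [show H₂.Adj x x' ↔ (sumGraph H₁ H₂).Adj (Sum.inr x) (Sum.inr x') from Iff.rfl,
      ← hx, ← hx', f.map_adj_iff]
    rfl

end Aux

section Main

variable {α β : Type*}

/-- Aut of a graph is isomorphic to Aut of its complement. -/
def complAut {α : Type*} (G : SimpleGraph α) : (G ≃g G) ≃* (Gᶜ ≃g Gᶜ) where
  toFun f := ⟨f.toEquiv, by
    intro a b
    simp [SimpleGraph.compl_adj, f.map_adj_iff, f.toEquiv.injective.ne_iff]⟩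
  invFun f := ⟨f.toEquiv, by
    intro a b
    have key : ∀ (x y : α), G.Adj x y ↔ x ≠ y ∧ ¬ Gᶜ.Adj x y := by
      intro x y
      simp only [SimpleGraph.compl_adj, not_and, not_not]
      constructor
      · exact fun hxy => ⟨hxy.ne, fun _ => hxy⟩
      · exact fun ⟨hne, himp⟩ => himp hne
    show G.Adj (f a) (f b) ↔ G.Adj a b
    rw [key, key, f.map_adj_iff]
    simp [ne_eq, EmbeddingLike.apply_eq_iff_eq]⟩
  left_inv f := rfl
  right_inv f := rfl
  map_mul' f g := rfl

lemma compl_joinGraph (G₁ : SimpleGraph α) (G₂ : SimpleGraph β) :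
    (joinGraph G₁ G₂)ᶜ = sumGraph G₁ᶜ G₂ᶜ := by
  ext a b
  rcases a with u | u <;> rcases b with v | v <;>
    simp [joinGraph, sumGraph, SimpleGraph.compl_adj, Sum.inl.injEq, Sum.inr.injEq]

/-- The monoid hom from pairs of automorphisms into automorphisms of the sum. -/
def sumAutHom (H₁ : SimpleGraph α) (H₂ : SimpleGraph β) :
    (H₁ ≃g H₁) × (H₂ ≃g H₂) →* (sumGraph H₁ H₂ ≃g sumGraph H₁ H₂) :=
  MonoidHom.mk' (fun p => ⟨Equiv.sumCongr p.1.toEquiv p.2.toEquiv, by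
    rintro (u | u) (v | v) <;> simp [p.1.map_adj_iff, p.2.map_adj_iff]⟩)
    (by
      rintro ⟨f₁, f₂⟩ ⟨g₁, g₂⟩
      apply RelIso.ext
      rintro (u | u) <;> rfl)

theorem sumAut_decomp {H₁ : SimpleGraph α} {H₂ : SimpleGraph β}
    (h : ∀ (c : H₁.ConnectedComponent) (d : H₂.ConnectedComponent),
      ¬ Nonempty (H₁.induce c.supp ≃g H₂.induce d.supp)) :
    Function.Bijective (sumAutHom H₁ H₂) := by
  have side : ∀ (f : sumGraph H₁ H₂ ≃g sumGraph H₁ H₂) (u : α),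
      ∃ u', f (Sum.inl u) = Sum.inl u' := by
    intro f u
    rcases hfu : f (Sum.inl u) with u' | w
    · exact ⟨u', rfl⟩
    · exact absurd (exists_iso f u w hfu) (h _ _)
  have side' : ∀ (f : sumGraph H₁ H₂ ≃g sumGraph H₁ H₂) (w : β),
      ∃ w', f (Sum.inr w) = Sum.inr w' := by
    intro f w
    rcases hfw : f (Sum.inr w) with u | w'
    · have : f.symm (Sum.inl u) = Sum.inr w := by rw [← hfw, f.symm_apply_apply]
      exact absurd (exists_iso f.symm u w this) (h _ _)
    · exact ⟨w', rfl⟩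
  constructor
  · rintro ⟨p₁, p₂⟩ ⟨q₁, q₂⟩ hpq
    simp only [Prod.mk.injEq]
    constructor
    · apply RelIso.ext
      intro u
      have := DFunLike.congr_fun hpq (Sum.inl u)
      exact Sum.inl.inj this
    · apply RelIso.ext
      intro w
      have := DFunLike.congr_fun hpq (Sum.inr w)
      exact Sum.inr.inj this
  · intro f
    have key1 : ∀ u, Sum.inl (Sum.elim id (fun _ => u) (f (Sum.inl u))) = f (Sum.inl u) := by
      intro u; obtain ⟨u', hu'⟩ := side f u; rw [hu']; rfl
    have key2 : ∀ w, Sum.inr (Sum.elim (fun w' : α => w) id (f (Sum.inr w))) = f (Sum.inr w) := by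
      intro w; obtain ⟨w', hw'⟩ := side' f w; rw [hw']; rfl
    have key1' : ∀ u, Sum.inl (Sum.elim id (fun _ => u) (f.symm (Sum.inl u)))
        = f.symm (Sum.inl u) := by
      intro u; obtain ⟨u', hu'⟩ := side f.symm u; rw [hu']; rfl
    have key2' : ∀ w, Sum.inr (Sum.elim (fun w' : α => w) id (f.symm (Sum.inr w)))
        = f.symm (Sum.inr w) := by
      intro w; obtain ⟨w', hw'⟩ := side' f.symm w; rw [hw']; rfl
    refine ⟨⟨⟨⟨fun u => Sum.elim id (fun _ => u) (f (Sum.inl u)),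
        fun u => Sum.elim id (fun _ => u) (f.symm (Sum.inl u)), ?_, ?_⟩, ?_⟩,
        ⟨⟨fun w => Sum.elim (fun _ => w) id (f (Sum.inr w)),
        fun w => Sum.elim (fun _ => w) id (f.symm (Sum.inr w)), ?_, ?_⟩, ?_⟩⟩, ?_⟩
    · intro u
      apply Sum.inl.inj
      rw [key1' _, key1 u, f.symm_apply_apply]
    · intro u
      apply Sum.inl.inj
      rw [key1 _, key1' u, f.apply_symm_apply]
    · intro u v
      have h3 := f.map_adj_iff (v := Sum.inl u) (w := Sum.inl v)
      rw [← key1 u, ← key1 v] at h3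
      exact h3
    · intro w
      apply Sum.inr.inj
      rw [key2' _, key2 w, f.symm_apply_apply]
    · intro w
      apply Sum.inr.inj
      rw [key2 _, key2' w, f.apply_symm_apply]
    · intro u v
      have h3 := f.map_adj_iff (v := Sum.inr u) (w := Sum.inr v)
      rw [← key2 u, ← key2 v] at h3
      exact h3
    · apply RelIso.ext
      rintro (u | u)
      · exact key1 u
      · exact key2 u

end Main

/-- If no connected component of `G₁ᶜ` is isomorphic to a connected component of
`G₂ᶜ`, then `Aut(G₁ + G₂) ≅ Aut(G₁) × Aut(G₂)`. -/
theorem stmt_4 {α β : Type*} (G₁ : SimpleGraph α) (G₂ : SimpleGraph β)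
    (h : ∀ (c : (G₁ᶜ).ConnectedComponent) (d : (G₂ᶜ).ConnectedComponent),
      ¬ Nonempty ((G₁ᶜ).induce c.supp ≃g (G₂ᶜ).induce d.supp)) :
    Nonempty ((joinGraph G₁ G₂ ≃g joinGraph G₁ G₂) ≃* (G₁ ≃g G₁) × (G₂ ≃g G₂)) := by
  have e1 : (joinGraph G₁ G₂ ≃g joinGraph G₁ G₂) ≃* (sumGraph G₁ᶜ G₂ᶜ ≃g sumGraph G₁ᶜ G₂ᶜ) := by
    rw [← compl_joinGraph]
    exact complAut _
  have e2 : ((G₁ᶜ ≃g G₁ᶜ) × (G₂ᶜ ≃g G₂ᶜ)) ≃* (sumGraph G₁ᶜ G₂ᶜ ≃g sumGraph G₁ᶜ G₂ᶜ) :=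
    MulEquiv.ofBijective _ (sumAut_decomp h)
  exact ⟨e1.trans (e2.symm.trans ((complAut G₁).symm.prodCongr (complAut G₂).symm))⟩
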